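/- Let Ω₁ ⊂ ℝ² satisfy Pólya's conjecture N_{Ω₁}^D(λ) ≤ (|Ω₁|ω(2)/(2π)²)λ for all λ, and let Ω₂ ⊂ ℝ be bounded open. Then for all λ > 0, the product Ω = Ω₁ × Ω₂ ⊂ ℝ³ satisfies N_Ω^D(λ) ≤ (|Ω|ω(3)/(2π)³) λ^{3/2} (1 − 3π/(16|Ω₂|√λ))_+. -/

import Mathlib

open Real

private lemma sum_sq_range (n : ℕ) :
    ∑ m ∈ Finset.range n, ((m : ℝ) + 1) ^ 2 = (n : ℝ) * ((n : ℝ) + 1) * (2 * (n : ℝ) + 1) / 6 := by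
  induction n with
  | zero => simp
  | succ k ih => rw [Finset.sum_range_succ, ih]; push_cast; ring

/-- Core real inequality: one-dimensional Riesz-mean bound. -/
private lemma core_sum_bound (t : ℝ) (ht : 1 ≤ t) (M : ℕ) :
    ∑ m ∈ Finset.range M, max (t ^ 2 - ((m : ℝ) + 1) ^ 2) 0 ≤ 2 / 3 * t ^ 3 - t ^ 2 / 8 := by
  set n := Nat.floor t with hn
  have ht0 : 0 ≤ t := by linarith
  have hn1 : 1 ≤ n := Nat.le_floor (by exact_mod_cast ht)
  have hnt : (n : ℝ) ≤ t := Nat.floor_le ht0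
  have htn : t < n + 1 := Nat.lt_floor_add_one t
  set g : ℕ → ℝ := fun m => max (t ^ 2 - ((m : ℝ) + 1) ^ 2) 0 with hg
  set N := max M n with hN
  have h1 : ∑ m ∈ Finset.range M, g m ≤ ∑ m ∈ Finset.range N, g m := by
    apply Finset.sum_le_sum_of_subset_of_nonneg
      (Finset.range_subset_range.mpr (le_max_left _ _))
    intro i _ _; exact le_max_right _ _
  have h2 : ∑ m ∈ Finset.range N, g m = ∑ m ∈ Finset.range n, (t ^ 2 - ((m : ℝ) + 1) ^ 2) := by
    rw [← Finset.sum_subset (Finset.range_subset_range.mpr (le_max_right M n))]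
    · apply Finset.sum_congr rfl
      intro m hm
      rw [Finset.mem_range] at hm
      apply max_eq_left
      have : (m : ℝ) + 1 ≤ n := by exact_mod_cast Nat.succ_le_of_lt hm
      nlinarith [hnt]
    · intro m _ hm
      rw [Finset.mem_range, not_lt] at hm
      apply max_eq_right
      have : (n : ℝ) ≤ m := by exact_mod_cast hm
      nlinarith [htn]
  rw [Finset.sum_sub_distrib, Finset.sum_const, Finset.card_range, sum_sq_range] at h2
  have key : (n : ℝ) * t ^ 2 - (n : ℝ) * ((n : ℝ) + 1) * (2 * (n : ℝ) + 1) / 6 ≤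
      2 / 3 * t ^ 3 - t ^ 2 / 8 := by
    set s := t - n with hs
    have hs0 : 0 ≤ s := by linarith
    have hs1 : s < 1 := by linarith
    have hnR : (1 : ℝ) ≤ n := by exact_mod_cast hn1
    have hts : t = n + s := by ring
    nlinarith [sq_nonneg (s - 1/8), sq_nonneg ((n:ℝ) - 1), mul_nonneg hs0 hs0,
      mul_nonneg (mul_nonneg hs0 hs0) hs0, mul_nonneg (sub_nonneg.mpr hnR) (sq_nonneg (s - 1/8))]
  calc ∑ m ∈ Finset.range M, g m ≤ ∑ m ∈ Finset.range N, g m := h1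
    _ = n • t ^ 2 - (n : ℝ) * ((n : ℝ) + 1) * (2 * (n : ℝ) + 1) / 6 := h2
    _ ≤ 2 / 3 * t ^ 3 - t ^ 2 / 8 := by simpa using key

/-- Let `Ω₁ ⊂ ℝ²` be a bounded open set of measure `L₁ > 0`
whose Dirichlet eigenvalues `lam1` (increasing, with finitely many below any
threshold) satisfy Pólya's conjecture `N_{Ω₁}^D(Λ) ≤ (L₁ ω(2)/(2π)²) Λ`
(`ω(2) = π`), and let `Ω₂ ⊂ ℝ` be bounded open of measure `L₂ > 0` with
Dirichlet eigenvalues `lam2` satisfying `λ_j ≥ π²j²/L₂²`.  Then the product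
`Ω = Ω₁ × Ω₂ ⊂ ℝ³`, whose spectrum consists of the sums `lam1 i + lam2 j`,
satisfies for all `Λ > 0`:
`N_Ω^D(Λ) ≤ (L₁L₂ ω(3)/(2π)³) Λ^{3/2} (1 - 3π/(16L₂√Λ))_+` with `ω(3) = 4π/3`. -/
theorem product_counting_dim_three
    (Ω₁ : Set (ℝ × ℝ)) (h1o : IsOpen Ω₁) (h1b : Bornology.IsBounded Ω₁)
    (Ω₂ : Set ℝ) (h2o : IsOpen Ω₂) (h2b : Bornology.IsBounded Ω₂)
    (L₁ L₂ : ℝ) (hL₁ : L₁ = (MeasureTheory.volume Ω₁).toReal)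
    (hL₂ : L₂ = (MeasureTheory.volume Ω₂).toReal)
    (hL₁pos : 0 < L₁) (hL₂pos : 0 < L₂)
    (lam1 lam2 : ℕ → ℝ) (hmono1 : Monotone lam1) (hmono2 : Monotone lam2)
    (hfin1 : ∀ Λ : ℝ, {k : ℕ | lam1 k < Λ}.Finite)
    (hP1 : ∀ Λ : ℝ, 0 < Λ →
      (Nat.card {k : ℕ // lam1 k < Λ} : ℝ) ≤ L₁ * π / (2 * π) ^ 2 * Λ)
    (hlam2 : ∀ k : ℕ, π ^ 2 * ((k : ℝ) + 1) ^ 2 / L₂ ^ 2 ≤ lam2 k)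
    (Λ : ℝ) (hΛ : 0 < Λ) :
    (Nat.card {q : ℕ × ℕ // lam1 q.1 + lam2 q.2 < Λ} : ℝ) ≤
      L₁ * L₂ * (4 / 3 * π) / (2 * π) ^ 3 * Λ ^ ((3 : ℝ) / 2) *
        max (1 - 3 * π / (16 * L₂ * Real.sqrt Λ)) 0 := by
  have hπ := Real.pi_pos
  set c := L₁ * π / (2 * π) ^ 2 with hc
  have hcpos : 0 < c := by positivity
  -- `lam1` is nonnegative
  have hnn : ∀ k, 0 ≤ lam1 k := by
    intro k
    by_contra h
    push_neg at h
    set ε := 1 / (2 * c) with hε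
    have hεpos : 0 < ε := by positivity
    have hfin : Finite {i : ℕ // lam1 i < ε} := (hfin1 ε).to_subtype
    have hne : Nonempty {i : ℕ // lam1 i < ε} := ⟨⟨k, h.trans hεpos⟩⟩
    have h1 : 0 < Nat.card {i : ℕ // lam1 i < ε} := Nat.card_pos
    have h2 : (1 : ℝ) ≤ Nat.card {i : ℕ // lam1 i < ε} := by exact_mod_cast h1
    have h3 := hP1 ε hεpos
    have : c * ε = 1 / 2 := by rw [hε, mul_one_div, div_eq_iff (by positivity)]; ring
    linarith
  -- bound for the 2D counting function
  have hN1 : ∀ x : ℝ, (((hfin1 x).toFinset.card : ℝ)) ≤ c * max x 0 := by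
    intro x
    rcases le_or_gt x 0 with hx | hx
    · have he : (hfin1 x).toFinset = ∅ := by
        ext k
        simp only [Set.Finite.mem_toFinset, Set.mem_setOf_eq, Finset.notMem_empty, iff_false,
          not_lt]
        exact hx.trans (hnn k)
      rw [he, max_eq_right hx]
      simp
    · have h3 := hP1 x hx
      rw [max_eq_left hx.le]
      have hcard : (Nat.card {k : ℕ // lam1 k < x} : ℝ) = ((hfin1 x).toFinset.card : ℝ) := by
        congr 1
        exact Nat.card_eq_card_finite_toFinset (hfin1 x)
      linarith [hcard ▸ h3]
  -- set up the scaled variable t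
  set t := L₂ * Real.sqrt Λ / π with htdef
  have hsqrtpos : 0 < Real.sqrt Λ := Real.sqrt_pos.mpr hΛ
  have htpos : 0 < t := by positivity
  have hsq : Real.sqrt Λ = π * t / L₂ := by
    rw [htdef]; field_simp
  have hΛeq : Λ = π ^ 2 * t ^ 2 / L₂ ^ 2 := by
    have h := Real.sq_sqrt hΛ.le
    rw [hsq] at h
    rw [← h]; field_simp
  set n := Nat.floor t with hn
  set A : ℕ → Finset ℕ := fun j => (hfin1 (Λ - lam2 j)).toFinset with hA
  set B := (Finset.range n).biUnion (fun j => (A j).image (fun i => (i, j))) with hB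
  have hmem : ∀ q : ℕ × ℕ, lam1 q.1 + lam2 q.2 < Λ → q ∈ B := by
    rintro ⟨i, j⟩ hq
    simp only [hB, Finset.mem_biUnion, Finset.mem_range, Finset.mem_image]
    have hj2 : lam2 j < Λ := by have := hnn i; simp only at hq ⊢; linarith
    have hμ : π ^ 2 * ((j : ℝ) + 1) ^ 2 / L₂ ^ 2 < Λ := lt_of_le_of_lt (hlam2 j) hj2
    have hjt : ((j : ℝ) + 1) < t := by
      rw [hΛeq] at hμ
      have h2 : ((j : ℝ) + 1) ^ 2 < t ^ 2 := by
        have hL2 : (0:ℝ) < L₂ ^ 2 := by positivity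
        have hπ2 : (0:ℝ) < π ^ 2 := by positivity
        rw [div_lt_div_iff₀ hL2 hL2] at hμ
        nlinarith [mul_pos hπ2 hL2]
      nlinarith [htpos]
    have hjn : j < n := by
      have h1 : (j + 1 : ℕ) ≤ n := Nat.le_floor (by push_cast; linarith)
      omega
    refine ⟨j, hjn, i, ?_, rfl⟩
    simp only [hA, Set.Finite.mem_toFinset, Set.mem_setOf_eq]
    simp only at hq
    linarith
  have hSfin : {q : ℕ × ℕ | lam1 q.1 + lam2 q.2 < Λ}.Finite :=
    Set.Finite.subset B.finite_toSet (fun q hq => hmem q hq)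
  have hcard1 : (Nat.card {q : ℕ × ℕ // lam1 q.1 + lam2 q.2 < Λ} : ℝ) ≤ (B.card : ℝ) := by
    have he : Nat.card {q : ℕ × ℕ // lam1 q.1 + lam2 q.2 < Λ} = hSfin.toFinset.card :=
      Nat.card_eq_card_finite_toFinset hSfin
    rw [he]
    exact_mod_cast Finset.card_le_card (fun q hq => hmem q (hSfin.mem_toFinset.mp hq))
  have hcard2 : (B.card : ℝ) ≤ ∑ j ∈ Finset.range n, ((A j).card : ℝ) := by
    have h1 : B.card ≤ ∑ j ∈ Finset.range n, ((A j).image (fun i => (i, j))).card :=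
      Finset.card_biUnion_le
    have h2 : ∑ j ∈ Finset.range n, ((A j).image (fun i => (i, j))).card ≤
        ∑ j ∈ Finset.range n, (A j).card :=
      Finset.sum_le_sum (fun j _ => Finset.card_image_le)
    exact_mod_cast h1.trans h2
  have hstep : ∑ j ∈ Finset.range n, ((A j).card : ℝ) ≤
      c * (π ^ 2 / L₂ ^ 2) * ∑ j ∈ Finset.range n, max (t ^ 2 - ((j : ℝ) + 1) ^ 2) 0 := by
    rw [Finset.mul_sum]
    apply Finset.sum_le_sum
    intro j _
    rw [mul_assoc]
    have hmax : π ^ 2 / L₂ ^ 2 * max (t ^ 2 - ((j : ℝ) + 1) ^ 2) 0 =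
        max (Λ - π ^ 2 * ((j : ℝ) + 1) ^ 2 / L₂ ^ 2) 0 := by
      rw [mul_max_of_nonneg _ _ (by positivity : (0:ℝ) ≤ π ^ 2 / L₂ ^ 2)]
      congr 1
      · rw [hΛeq]; ring
      · ring
    rw [hmax]
    calc ((A j).card : ℝ) ≤ c * max (Λ - lam2 j) 0 := hN1 _
      _ ≤ c * max (Λ - π ^ 2 * ((j : ℝ) + 1) ^ 2 / L₂ ^ 2) 0 := by
          apply mul_le_mul_of_nonneg_left _ hcpos.le
          exact max_le_max (by linarith [hlam2 j]) le_rfl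
  have hchain : (Nat.card {q : ℕ × ℕ // lam1 q.1 + lam2 q.2 < Λ} : ℝ) ≤
      c * (π ^ 2 / L₂ ^ 2) * ∑ j ∈ Finset.range n, max (t ^ 2 - ((j : ℝ) + 1) ^ 2) 0 :=
    hcard1.trans (hcard2.trans hstep)
  rcases lt_or_ge t 1 with ht1 | ht1
  · -- small t : spectrum empty
    have hn0 : n = 0 := Nat.floor_eq_zero.mpr ht1
    rw [hn0] at hchain
    simp only [Finset.range_zero, Finset.sum_empty, mul_zero] at hchain
    have hrhs : 0 ≤ L₁ * L₂ * (4 / 3 * π) / (2 * π) ^ 3 * Λ ^ ((3 : ℝ) / 2) *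
        max (1 - 3 * π / (16 * L₂ * Real.sqrt Λ)) 0 := by
      have h1 : (0:ℝ) < Λ ^ ((3 : ℝ) / 2) := Real.rpow_pos_of_pos hΛ _
      have h2 : (0:ℝ) ≤ max (1 - 3 * π / (16 * L₂ * Real.sqrt Λ)) 0 := le_max_right _ _
      have h3 : (0:ℝ) < L₁ * L₂ * (4 / 3 * π) / (2 * π) ^ 3 := by positivity
      positivity
    linarith
  · -- main case t ≥ 1
    have hS := core_sum_bound t ht1 n
    have hmaxeq : max (1 - 3 * π / (16 * L₂ * Real.sqrt Λ)) 0 = 1 - 3 / (16 * t) := by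
      have heq : 3 * π / (16 * L₂ * Real.sqrt Λ) = 3 / (16 * t) := by
        rw [hsq]; field_simp
      rw [heq]
      apply max_eq_left
      have : 3 / (16 * t) ≤ 3 / 16 := by
        apply div_le_div_of_nonneg_left (by norm_num) (by norm_num)
        linarith
      linarith
    have hrpow : Λ ^ ((3 : ℝ) / 2) = (π * t / L₂) ^ 3 := by
      rw [← hsq]
      rw [Real.sqrt_eq_rpow, ← Real.rpow_natCast (Λ ^ ((1:ℝ)/2)) 3, ← Real.rpow_mul hΛ.le]
      norm_num
    have hKeq : L₁ * L₂ * (4 / 3 * π) / (2 * π) ^ 3 * ((π * t / L₂) ^ 3) * (1 - 3 / (16 * t)) =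
        c * (π ^ 2 / L₂ ^ 2) * (2 / 3 * t ^ 3 - t ^ 2 / 8) := by
      rw [hc]; field_simp; ring
    rw [hmaxeq, hrpow, hKeq]
    have hcc : (0:ℝ) ≤ c * (π ^ 2 / L₂ ^ 2) := by positivity
    calc (Nat.card {q : ℕ × ℕ // lam1 q.1 + lam2 q.2 < Λ} : ℝ) ≤
        c * (π ^ 2 / L₂ ^ 2) * ∑ j ∈ Finset.range n, max (t ^ 2 - ((j : ℝ) + 1) ^ 2) 0 := hchain
      _ ≤ c * (π ^ 2 / L₂ ^ 2) * (2 / 3 * t ^ 3 - t ^ 2 / 8) :=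
          mul_le_mul_of_nonneg_left hS hcc
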